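/- arXiv:math/0307085 — 2 statements merged into one kernel-verified Lean document; each statement's English description precedes it below -/
import Mathlib

section
/- For every k ∈ I, every i ∈ I and all Young diagrams Y and Y′ of charge k: f̃_i Y = Y′ if and only if ẽ_i Y′ = Y. -/
open scoped Classical

noncomputable section

/-- The base field `ℚ(q)`. -/
abbrev Kq : Type := RatFunc ℚ

/-- The indeterminate `q` of `ℚ(q)`. -/
def fq : Kq := RatFunc.X

/-- The generalized Cartan matrix of affine type `C_n^{(1)}` (meaningful for `i, j ≤ n`). -/
def cartan (n i j : ℕ) : ℤ :=
  if i = j then 2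
  else if i = 1 ∧ j = 0 then -2
  else if i = n - 1 ∧ j = n then -2
  else if i + 1 = j ∨ j + 1 = i then -1
  else 0

/-- The symmetrizing integers: `s 0 = s n = 2`, otherwise `1`. -/
def sg (n i : ℕ) : ℕ := if i = 0 ∨ i = n then 2 else 1

/-- `q_i = q ^ s_i`. -/
def qi (n i : ℕ) : Kq := fq ^ sg n i

/-- The colour of the site `(l, z)`: the unique `i ∈ {0,…,n}` with
`l + z ≡ i` or `-i (mod 2n)`. -/
def colour (n l : ℕ) (z : ℤ) : ℕ :=
  let r := (((l : ℤ) + z) % (2 * (n : ℤ))).toNat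
  if r ≤ n then r else 2 * n - r

/-- A Young diagram of charge `k`: a nondecreasing sequence of integers eventually
equal to `k`. -/
structure YD (n k : ℕ) where
  y : ℕ → ℤ
  mono : Monotone y
  eventually : ∃ N, ∀ l, N ≤ l → y l = (k : ℤ)

variable {n k : ℕ}

/-- `Y` has a concave corner at site `(l, z)`. -/
def ConcaveAt (Y : YD n k) (l : ℕ) (z : ℤ) : Prop :=
  (l = 0 ∧ z = Y.y 0) ∨ (∃ m, l = m + 1 ∧ Y.y m < Y.y (m + 1) ∧ z = Y.y (m + 1))

/-- `Y` has a convex corner at site `(l, z)`. -/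
def ConvexAt (Y : YD n k) (l : ℕ) (z : ℤ) : Prop :=
  ∃ m, l = m + 1 ∧ Y.y m < Y.y (m + 1) ∧ z = Y.y m

/-- The number of `i`-coloured concave corners of `Y`. -/
def cc (i : ℕ) (Y : YD n k) : ℕ :=
  {p : ℕ × ℤ | ConcaveAt Y p.1 p.2 ∧ colour n p.1 p.2 = i}.ncard

/-- The number of `i`-coloured convex corners of `Y`. -/
def cx (i : ℕ) (Y : YD n k) : ℕ :=
  {p : ℕ × ℤ | ConvexAt Y p.1 p.2 ∧ colour n p.1 p.2 = i}.ncard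

/-- The number of `j`-coloured boxes of `Y`. -/
def boxes (j : ℕ) (Y : YD n k) : ℕ :=
  {p : ℕ × ℤ | Y.y p.1 < p.2 ∧ p.2 ≤ (k : ℤ) ∧ colour n p.1 p.2 = j}.ncard

/-- Removing the convex corner of `Y` at site `(l, z)`. -/
def removeY (Y : YD n k) (l : ℕ) (z : ℤ) (h : ConvexAt Y l z) : YD n k where
  y := Function.update Y.y (l - 1) (Y.y (l - 1) + 1)
  mono := by
    obtain ⟨m, rfl, hlt, -⟩ := h
    simp only [Nat.add_sub_cancel]
    apply monotone_nat_of_le_succ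
    intro r
    rcases eq_or_ne r m with rfl | h1
    · rw [Function.update_self, Function.update_of_ne (by omega)]
      omega
    · rcases eq_or_ne (r + 1) m with h2 | h2
      · rw [Function.update_of_ne h1, h2, Function.update_self]
        have hm := Y.mono (Nat.le_add_right r 1)
        rw [h2] at hm
        omega
      · rw [Function.update_of_ne h1, Function.update_of_ne h2]
        exact Y.mono (Nat.le_add_right r 1)
  eventually := by
    obtain ⟨N, hN⟩ := Y.eventually
    exact ⟨N + l + 1, fun r hr => by
      rw [Function.update_of_ne (by omega)]
      exact hN r (by omega)⟩

/-- Adding a box at the concave corner of `Y` at site `(l, z)`. -/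
def addY (Y : YD n k) (l : ℕ) (z : ℤ) (h : ConcaveAt Y l z) : YD n k where
  y := Function.update Y.y l (Y.y l - 1)
  mono := by
    apply monotone_nat_of_le_succ
    intro r
    rcases eq_or_ne r l with rfl | h1
    · rw [Function.update_self, Function.update_of_ne (by omega)]
      have := Y.mono (Nat.le_add_right r 1)
      omega
    · rcases eq_or_ne (r + 1) l with h2 | h2
      · rw [Function.update_of_ne h1, h2, Function.update_self]
        rcases h with ⟨hl0, -⟩ | ⟨m, hm, hlt, -⟩
        · omega
        · have hrm : r = m := by omega
          subst hrm
          rw [← hm] at hlt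
          omega
      · rw [Function.update_of_ne h1, Function.update_of_ne h2]
        exact Y.mono (Nat.le_add_right r 1)
  eventually := by
    obtain ⟨N, hN⟩ := Y.eventually
    exact ⟨N + l + 1, fun r hr => by
      rw [Function.update_of_ne (by omega)]
      exact hN r (by omega)⟩

/-- The Fock space `F(Λ_k)`: the `ℚ(q)`-vector space with basis the Young diagrams of
charge `k`. -/
abbrev Fock (n k : ℕ) := YD n k →₀ Kq

/-- The basis vector of the Fock space corresponding to a Young diagram. -/
def fockB (Y : YD n k) : Fock n k := Finsupp.single Y 1

/-- The linear operator on the Fock space determined by its values on basis vectors. -/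
def lift (g : YD n k → Fock n k) : Fock n k →ₗ[Kq] Fock n k :=
  Finsupp.lsum Kq fun Y => LinearMap.toSpanSingleton Kq (Fock n k) (g Y)

/-- The single-site operator `E_{(l,z)}`. -/
def Esite (n k : ℕ) (l : ℕ) (z : ℤ) : Fock n k →ₗ[Kq] Fock n k :=
  lift fun Y => if h : ConvexAt Y l z then fockB (removeY Y l z h) else 0

/-- The single-site operator `F_{(l,z)}`. -/
def Fsite (n k : ℕ) (l : ℕ) (z : ℤ) : Fock n k →ₗ[Kq] Fock n k :=
  lift fun Y => if h : ConcaveAt Y l z then fockB (addY Y l z h) else 0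

/-- `a(i,l,z,Y)`: the number of `i`-coloured concave corners at sites greater than `(l,z)`
minus the number of `i`-coloured convex corners at sites greater than `(l,z)`. -/
def aExp (i l : ℕ) (z : ℤ) (Y : YD n k) : ℤ :=
  ({p : ℕ × ℤ | ConcaveAt Y p.1 p.2 ∧ colour n p.1 p.2 = i ∧
      (l : ℤ) + z < (p.1 : ℤ) + p.2}.ncard : ℤ)
  - ({p : ℕ × ℤ | ConvexAt Y p.1 p.2 ∧ colour n p.1 p.2 = i ∧
      (l : ℤ) + z < (p.1 : ℤ) + p.2}.ncard : ℤ)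

/-- `b(i,l,z,Y)`: the number of `i`-coloured convex corners at sites smaller than `(l,z)`
minus the number of `i`-coloured concave corners at sites smaller than `(l,z)`. -/
def bExp (i l : ℕ) (z : ℤ) (Y : YD n k) : ℤ :=
  ({p : ℕ × ℤ | ConvexAt Y p.1 p.2 ∧ colour n p.1 p.2 = i ∧
      (p.1 : ℤ) + p.2 < (l : ℤ) + z}.ncard : ℤ)
  - ({p : ℕ × ℤ | ConcaveAt Y p.1 p.2 ∧ colour n p.1 p.2 = i ∧
      (p.1 : ℤ) + p.2 < (l : ℤ) + z}.ncard : ℤ)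

/-- The Chevalley-type operator `E_i` on the Fock space: on a basis diagram `Y`,
`E_i Y = Σ_{(l,z) : i-coloured convex corner of Y} q_i^{a(i,l,z,Y)} • (Y with corner removed)`,
where the power of `q_i` records the product of the `T⁺` factors at larger `i`-coloured sites. -/
def Ei (n k i : ℕ) : Fock n k →ₗ[Kq] Fock n k :=
  lift fun Y => ∑ᶠ p : ℕ × ℤ,
    if h : ConvexAt Y p.1 p.2 ∧ colour n p.1 p.2 = i then
      (qi n i ^ aExp i p.1 p.2 Y) • fockB (removeY Y p.1 p.2 h.1)
    else 0

/-- The Chevalley-type operator `F_i` on the Fock space: on a basis diagram `Y`,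
`F_i Y = Σ_{(l,z) : i-coloured concave corner of Y} q_i^{b(i,l,z,Y)} • (Y with box added)`,
where the power of `q_i` records the product of the `T⁻` factors at smaller `i`-coloured sites. -/
def Fi (n k i : ℕ) : Fock n k →ₗ[Kq] Fock n k :=
  lift fun Y => ∑ᶠ p : ℕ × ℤ,
    if h : ConcaveAt Y p.1 p.2 ∧ colour n p.1 p.2 = i then
      (qi n i ^ bExp i p.1 p.2 Y) • fockB (addY Y p.1 p.2 h.1)
    else 0

/-- The operator `T_i⁺ = ∏_{(l,z) of colour i} T⁺_{(l,z)}`: it multiplies a basis diagram `Y`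
by `q_i^{cc_i(Y) - cx_i(Y)}`. -/
def Tplus (n k i : ℕ) : Fock n k →ₗ[Kq] Fock n k :=
  lift fun Y => (qi n i ^ ((cc i Y : ℤ) - (cx i Y : ℤ))) • fockB Y

/-- The operator `T_i⁻ = ∏_{(l,z) of colour i} T⁻_{(l,z)}`: it multiplies a basis diagram `Y`
by `q_i^{-(cc_i(Y) - cx_i(Y))}`. -/
def Tminus (n k i : ℕ) : Fock n k →ₗ[Kq] Fock n k :=
  lift fun Y => (qi n i ^ (-((cc i Y : ℤ) - (cx i Y : ℤ)))) • fockB Y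

/-- The operator `T_d`: it multiplies a basis diagram `Y` by `q^{-b_0(Y)}`. -/
def Td (n k : ℕ) : Fock n k →ₗ[Kq] Fock n k :=
  lift fun Y => (fq ^ (-(boxes 0 Y : ℤ))) • fockB Y

/-- The quantum integer `[m]_x = (x^m - x^{-m})/(x - x^{-1})`. -/
def qInt (x : Kq) (m : ℕ) : Kq := (x ^ m - x⁻¹ ^ m) / (x - x⁻¹)

/-- The quantum factorial `[m]_x!`. -/
def qFact (x : Kq) : ℕ → Kq
  | 0 => 1
  | m + 1 => qInt x (m + 1) * qFact x m

/-- The quantum binomial coefficient `[m choose r]_x`. -/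
def qBinom (x : Kq) (m r : ℕ) : Kq := qFact x m / (qFact x r * qFact x (m - r))

/-- The empty Young diagram `φ_k` of charge `k`. -/
def phiYD (n k : ℕ) : YD n k :=
  ⟨fun _ => (k : ℤ), monotone_const, ⟨0, fun _ _ => rfl⟩⟩

/-- `Y` has an (either concave or convex) corner at site `(l, z)`. -/
def CornerAt (Y : YD n k) (l : ℕ) (z : ℤ) : Prop := ConcaveAt Y l z ∨ ConvexAt Y l z

/-- `L` lists the sites of the `i`-coloured corners of `Y` in strictly decreasing order. -/
def Enumerates (Y : YD n k) (i : ℕ) (L : List (ℕ × ℤ)) : Prop :=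
  (∀ p : ℕ × ℤ, p ∈ L ↔ (CornerAt Y p.1 p.2 ∧ colour n p.1 p.2 = i)) ∧
  L.Chain' (fun p q => (q.1 : ℤ) + q.2 < (p.1 : ℤ) + p.2)

/-- The `i`-signature of `Y` along the list `L` of its `i`-coloured corner sites:
each site is tagged `true` if the corner there is convex (`σ = 1`) and `false`
if it is concave (`σ = 0`). -/
def sigL (Y : YD n k) (L : List (ℕ × ℤ)) : List ((ℕ × ℤ) × Bool) :=
  L.map fun p => (p, if ConvexAt Y p.1 p.2 then true else false)

/-- Reduction of a signature: repeatedly delete adjacent pairs `(0, 1)` (a concave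
entry immediately followed by a convex entry); the surviving entries are those
indexed by `J(σ)`. -/
def reduceSig : List ((ℕ × ℤ) × Bool) → List ((ℕ × ℤ) × Bool) :=
  List.foldr (fun x acc =>
    if x.2 = false ∧ acc.head?.map Prod.snd = some true then acc.tail else x :: acc) []

/-- The site at which `f̃_i` adds a box: the corner of the smallest index `r ∈ J(σ)`
with `σ_r = 0` (`none` if there is no such index, i.e. `f̃_i Y = 0`). -/
def ftildeSite (Y : YD n k) (i : ℕ) (L : List (ℕ × ℤ)) : Option (ℕ × ℤ) :=
  ((reduceSig (sigL Y L)).find? (fun x => !x.2)).map Prod.fst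

/-- The site at which `ẽ_i` removes a box: the corner of the largest index `r ∈ J(σ)`
with `σ_r = 1` (`none` if there is no such index, i.e. `ẽ_i Y = 0`). -/
def etildeSite (Y : YD n k) (i : ℕ) (L : List (ℕ × ℤ)) : Option (ℕ × ℤ) :=
  (((reduceSig (sigL Y L)).filter (fun x => x.2)).getLast?).map Prod.fst

/-! ### Auxiliary lemmas -/

namespace FEaux

/-- The diagonal of a site. -/
def dg (p : ℕ × ℤ) : ℤ := (p.1 : ℤ) + p.2

lemma colour_mod_two {n : ℕ} (hn : 0 < n) (a : ℕ) (z : ℤ) :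
    (colour n a z : ℤ) % 2 = ((a : ℤ) + z) % 2 := by
  have hn' : (0:ℤ) < 2 * (n:ℤ) := by positivity
  have h0 : 0 ≤ ((a:ℤ)+z) % (2*(n:ℤ)) := Int.emod_nonneg _ (by omega)
  have h1 : ((a:ℤ)+z) % (2*(n:ℤ)) < 2*(n:ℤ) := Int.emod_lt_of_pos _ hn'
  have h2 : ((a:ℤ)+z) % (2*(n:ℤ)) % 2 = ((a:ℤ)+z) % 2 :=
    Int.emod_emod_of_dvd _ ⟨(n:ℤ), by ring⟩
  simp only [colour]
  have hr : ((((a:ℤ)+z) % (2*(n:ℤ))).toNat : ℤ) = ((a:ℤ)+z) % (2*(n:ℤ)) :=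
    Int.toNat_of_nonneg h0
  split
  · omega
  · push_cast
    omega

lemma colour_ne {n : ℕ} (hn : 0 < n) {a a' : ℕ} {z z' : ℤ}
    (h : (a:ℤ) + z + 1 = (a':ℤ) + z' ∨ (a':ℤ) + z' + 1 = (a:ℤ) + z) :
    colour n a z ≠ colour n a' z' := by
  intro he
  have h1 := colour_mod_two hn a z
  have h2 := colour_mod_two hn a' z'
  rw [he] at h1
  omega

lemma colour_congr {n : ℕ} {a a' : ℕ} {z z' : ℤ} (h : (a:ℤ) + z = (a':ℤ) + z') :
    colour n a z = colour n a' z' := by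
  simp only [colour, h]

variable {n k : ℕ}

lemma concaveAt_iff (Y : YD n k) (a : ℕ) (z : ℤ) :
    ConcaveAt Y a z ↔ (z = Y.y a ∧ (a = 0 ∨ Y.y (a-1) < Y.y a)) := by
  constructor
  · rintro (⟨h0, hz⟩ | ⟨m, rfl, hlt, hz⟩)
    · subst h0; exact ⟨hz, Or.inl rfl⟩
    · exact ⟨hz, Or.inr (by simpa using hlt)⟩
  · rintro ⟨rfl, (rfl | hlt)⟩
    · exact Or.inl ⟨rfl, rfl⟩
    · cases a with
      | zero => simp at hlt
      | succ m => exact Or.inr ⟨m, rfl, by simpa using hlt, rfl⟩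

lemma convexAt_iff (Y : YD n k) (a : ℕ) (z : ℤ) :
    ConvexAt Y a z ↔ (1 ≤ a ∧ z = Y.y (a-1) ∧ Y.y (a-1) < Y.y a) := by
  constructor
  · rintro ⟨m, rfl, hlt, hz⟩
    exact ⟨by omega, by simpa using hz, by simpa using hlt⟩
  · rintro ⟨ha, hz, hlt⟩
    cases a with
    | zero => omega
    | succ m => exact ⟨m, rfl, by simpa using hlt, by simpa using hz⟩

section Geo

variable {Y Y' : YD n k} {l : ℕ} {c : ℤ}

lemma geo_Y'l (hY' : Y'.y = Function.update Y.y l (c-1)) : Y'.y l = c - 1 := by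
  rw [hY', Function.update_self]

lemma geo_agree (hY' : Y'.y = Function.update Y.y l (c-1)) {a : ℕ} (ha : a ≠ l) :
    Y'.y a = Y.y a := by
  rw [hY', Function.update_of_ne ha]

lemma geo_concave (hYl : Y.y l = c) (hcc : l = 0 ∨ Y.y (l-1) < c) :
    ConcaveAt Y l c := by
  rw [concaveAt_iff]
  exact ⟨hYl.symm, by rcases hcc with h | h; exact Or.inl h; exact Or.inr (by omega)⟩

lemma geo_notconvex (hYl : Y.y l = c) : ¬ ConvexAt Y l c := by
  rw [convexAt_iff]
  rintro ⟨h1, h2, h3⟩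
  omega

lemma geo_convex' (hYl : Y.y l = c) (hY' : Y'.y = Function.update Y.y l (c-1)) :
    ConvexAt Y' (l+1) (c-1) := by
  rw [convexAt_iff]
  have h1 : Y'.y l = c - 1 := geo_Y'l hY'
  have h2 : Y'.y (l+1) = Y.y (l+1) := geo_agree hY' (by omega)
  have h3 : Y.y l ≤ Y.y (l+1) := Y.mono (Nat.le_succ l)
  refine ⟨by omega, ?_, ?_⟩ <;> simp only [Nat.add_sub_cancel] <;> omega

lemma geo_notcorner'_p (hYl : Y.y l = c) (hcc : l = 0 ∨ Y.y (l-1) < c)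
    (hY' : Y'.y = Function.update Y.y l (c-1)) : ¬ CornerAt Y' l c := by
  have h1 : Y'.y l = c - 1 := geo_Y'l hY'
  rintro (hc | hc)
  · rw [concaveAt_iff] at hc; omega
  · rw [convexAt_iff] at hc
    obtain ⟨ha, hz, hlt⟩ := hc
    have h2 : Y'.y (l-1) = Y.y (l-1) := geo_agree hY' (by omega)
    omega

lemma geo_notcorner_q (hYl : Y.y l = c) : ¬ CornerAt Y (l+1) (c-1) := by
  have h3 : Y.y l ≤ Y.y (l+1) := Y.mono (Nat.le_succ l)
  rintro (hc | hc)
  · rw [concaveAt_iff] at hc; omega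
  · rw [convexAt_iff] at hc
    obtain ⟨ha, hz, hlt⟩ := hc
    simp only [Nat.add_sub_cancel] at hz hlt
    omega

lemma geo_concave_iff (hn : 0 < n) (hYl : Y.y l = c) (hcc : l = 0 ∨ Y.y (l-1) < c)
    (hY' : Y'.y = Function.update Y.y l (c-1))
    {a : ℕ} {z : ℤ} (hco : colour n a z = colour n l c)
    (hp : ¬(a = l ∧ z = c)) (hq : ¬(a = l + 1 ∧ z = c - 1)) :
    (ConcaveAt Y a z ↔ ConcaveAt Y' a z) := by
  have h1 : Y'.y l = c - 1 := geo_Y'l hY'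
  rcases eq_or_ne a l with rfl | hal
  · rw [concaveAt_iff, concaveAt_iff]
    constructor
    · rintro ⟨hz, -⟩; exact absurd ⟨rfl, by omega⟩ hp
    · rintro ⟨hz, -⟩
      exfalso
      exact colour_ne hn (Or.inl (by omega)) hco
  · rcases eq_or_ne a (l+1) with rfl | hal1
    · have h2 : Y'.y (l+1) = Y.y (l+1) := geo_agree hY' (by omega)
      have h3 : Y.y l ≤ Y.y (l+1) := Y.mono (Nat.le_succ l)
      rw [concaveAt_iff, concaveAt_iff]
      simp only [Nat.add_sub_cancel]
      constructor
      · rintro ⟨hz, h⟩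
        exact ⟨by omega, Or.inr (by omega)⟩
      · rintro ⟨hz, h⟩
        refine ⟨by omega, Or.inr ?_⟩
        rcases lt_or_eq_of_le h3 with h4 | h4
        · omega
        · exfalso
          exact colour_ne hn (Or.inr (by omega)) hco
    · have h2 : Y'.y a = Y.y a := geo_agree hY' hal
      have h3 : Y'.y (a-1) = Y.y (a-1) := geo_agree hY' (by omega)
      rw [concaveAt_iff, concaveAt_iff, h2, h3]

lemma geo_convex_iff (hn : 0 < n) (hYl : Y.y l = c) (hcc : l = 0 ∨ Y.y (l-1) < c)
    (hY' : Y'.y = Function.update Y.y l (c-1))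
    {a : ℕ} {z : ℤ} (hco : colour n a z = colour n l c)
    (hp : ¬(a = l ∧ z = c)) (hq : ¬(a = l + 1 ∧ z = c - 1)) :
    (ConvexAt Y a z ↔ ConvexAt Y' a z) := by
  have h1 : Y'.y l = c - 1 := geo_Y'l hY'
  rcases eq_or_ne a l with rfl | hal
  · have h2 : a = 0 ∨ Y'.y (a-1) = Y.y (a-1) := by
      rcases Nat.eq_zero_or_pos a with h | h
      · exact Or.inl h
      · exact Or.inr (geo_agree hY' (by omega))
    rw [convexAt_iff, convexAt_iff]
    constructor
    · rintro ⟨ha, hz, hlt⟩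
      rcases h2 with h2 | h2
      · omega
      · refine ⟨ha, by omega, ?_⟩
        rw [h2]
        rcases lt_or_eq_of_le (by omega : Y.y (a-1) ≤ c - 1) with h4 | h4
        · omega
        · exfalso
          exact colour_ne hn (Or.inl (by omega)) hco
    · rintro ⟨ha, hz, hlt⟩
      rcases h2 with h2 | h2
      · omega
      · exact ⟨ha, by omega, by omega⟩
  · rcases eq_or_ne a (l+1) with rfl | hal1
    · have h2 : Y'.y (l+1) = Y.y (l+1) := geo_agree hY' (by omega)
      rw [convexAt_iff, convexAt_iff]
      simp only [Nat.add_sub_cancel]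
      constructor
      · rintro ⟨ha, hz, hlt⟩
        exfalso
        exact colour_ne hn (Or.inr (by omega)) hco
      · rintro ⟨ha, hz, hlt⟩
        exact absurd ⟨rfl, by omega⟩ hq
    · have h2 : Y'.y a = Y.y a := geo_agree hY' hal
      have h3 : Y'.y (a-1) = Y.y (a-1) := geo_agree hY' (by omega)
      rw [convexAt_iff, convexAt_iff, h2, h3]

end Geo

end FEaux
namespace FEaux

abbrev XX : Type := (ℕ × ℤ) × Bool

/-- The step function of `reduceSig`. -/
def redStep (x : XX) (acc : List XX) : List XX :=
  if x.2 = false ∧ acc.head?.map Prod.snd = some true then acc.tail else x :: acc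

lemma reduceSig_def (s : List XX) : reduceSig s = s.foldr redStep [] := rfl

/-- State machine step: `(T, F)` = (surviving trues, surviving falses). -/
def step2 (x : XX) (st : List XX × List XX) : List XX × List XX :=
  if x.2 then (x :: st.1, st.2)
  else match st.1 with
  | [] => ([], x :: st.2)
  | _ :: T => (T, st.2)

def run (s : List XX) (st : List XX × List XX) : List XX × List XX := s.foldr step2 st

lemma run_nil (st : List XX × List XX) : run [] st = st := rfl

lemma run_cons (x : XX) (s : List XX) (st : List XX × List XX) :
    run (x :: s) st = step2 x (run s st) := rfl

lemma run_append (s t : List XX) (st : List XX × List XX) :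
    run (s ++ t) st = run s (run t st) := List.foldr_append

lemma step2_true {x : XX} (hx : x.2 = true) (T F : List XX) :
    step2 x (T, F) = (x :: T, F) := by simp [step2, hx]

lemma step2_false_nil {x : XX} (hx : x.2 = false) (F : List XX) :
    step2 x ([], F) = ([], x :: F) := by simp [step2, hx]

lemma step2_false_cons {x : XX} (hx : x.2 = false) (t : XX) (T F : List XX) :
    step2 x (t :: T, F) = (T, F) := by simp [step2, hx]

lemma bridge : ∀ (s : List XX) (T F : List XX), (∀ x ∈ T, x.2 = true) → (∀ x ∈ F, x.2 = false) →
    s.foldr redStep (T ++ F) = (run s (T, F)).1 ++ (run s (T, F)).2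
    ∧ (∀ x ∈ (run s (T, F)).1, x.2 = true) ∧ (∀ x ∈ (run s (T, F)).2, x.2 = false)
  | [], T, F, hT, hF => ⟨rfl, hT, hF⟩
  | x :: s, T, F, hT, hF => by
    obtain ⟨h1, h2, h3⟩ := bridge s T F hT hF
    rcases hst : run s (T, F) with ⟨T', F'⟩
    rw [hst] at h1 h2 h3
    simp only [List.foldr_cons, h1, run_cons, hst]
    cases hx : x.2 with
    | true =>
      rw [step2_true hx]
      refine ⟨?_, ?_, h3⟩
      · simp only [redStep, hx]
        simp
      · intro y hy
        rcases List.mem_cons.mp hy with rfl | hy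
        · exact hx
        · exact h2 y hy
    | false =>
      cases T' with
      | nil =>
        rw [step2_false_nil hx]
        refine ⟨?_, by simp, ?_⟩
        · simp only [redStep, hx, List.nil_append]
          cases F' with
          | nil => simp
          | cons f F'' =>
            have hf : f.2 = false := h3 f (List.mem_cons_self)
            simp [hf]
        · intro y hy
          rcases List.mem_cons.mp hy with rfl | hy
          · exact hx
          · exact h3 y hy
      | cons t T'' =>
        rw [step2_false_cons hx]
        refine ⟨?_, fun y hy => h2 y (List.mem_cons_of_mem _ hy), h3⟩
        have ht : t.2 = true := h2 t (List.mem_cons_self)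
        simp [redStep, hx, ht]

lemma mem_run_fst : ∀ (s : List XX) (st : List XX × List XX) (x : XX),
    x ∈ (run s st).1 → x ∈ s ∨ x ∈ st.1
  | [], st, x, h => Or.inr h
  | x0 :: s, st, x, h => by
    rw [run_cons] at h
    rcases hst : run s st with ⟨T', F'⟩
    rw [hst] at h
    have IH : x ∈ T' → x ∈ s ∨ x ∈ st.1 := fun hx =>
      mem_run_fst s st x (by rw [hst]; exact hx)
    cases hx0 : x0.2 with
    | true =>
      rw [step2_true hx0] at h
      rcases List.mem_cons.mp h with rfl | h
      · exact Or.inl (List.mem_cons_self)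
      · rcases IH h with h | h
        · exact Or.inl (List.mem_cons_of_mem _ h)
        · exact Or.inr h
    | false =>
      cases T' with
      | nil => rw [step2_false_nil hx0] at h; simp at h
      | cons t T'' =>
        rw [step2_false_cons hx0] at h
        rcases IH (List.mem_cons_of_mem _ h) with h | h
        · exact Or.inl (List.mem_cons_of_mem _ h)
        · exact Or.inr h

lemma mem_run_snd : ∀ (s : List XX) (st : List XX × List XX) (x : XX),
    x ∈ (run s st).2 → x ∈ s ∨ x ∈ st.2
  | [], st, x, h => Or.inr h
  | x0 :: s, st, x, h => by
    rw [run_cons] at h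
    rcases hst : run s st with ⟨T', F'⟩
    rw [hst] at h
    have IH : x ∈ F' → x ∈ s ∨ x ∈ st.2 := fun hx =>
      mem_run_snd s st x (by rw [hst]; exact hx)
    have lift : x ∈ s ∨ x ∈ st.2 → x ∈ x0 :: s ∨ x ∈ st.2 := by
      rintro (h | h)
      · exact Or.inl (List.mem_cons_of_mem _ h)
      · exact Or.inr h
    cases hx0 : x0.2 with
    | true =>
      rw [step2_true hx0] at h
      exact lift (IH h)
    | false =>
      cases T' with
      | nil =>
        rw [step2_false_nil hx0] at h
        rcases List.mem_cons.mp h with rfl | h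
        · exact Or.inl (List.mem_cons_self)
        · exact lift (IH h)
      | cons t T'' =>
        rw [step2_false_cons hx0] at h
        exact lift (IH h)

lemma run_fst_suffix : ∀ (s : List XX) (st : List XX × List XX),
    ∃ T1 T0, T0 <:+ st.1 ∧ (run s st).1 = T1 ++ T0 ∧ ∀ x ∈ T1, x ∈ s
  | [], st => ⟨[], st.1, List.suffix_refl _, rfl, by simp⟩
  | x0 :: s, st => by
    obtain ⟨T1, T0, hsuf, heq, hmem⟩ := run_fst_suffix s st
    rcases hst : run s st with ⟨T', F'⟩
    rw [hst] at heq
    simp only at heq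
    rw [run_cons, hst]
    cases hx0 : x0.2 with
    | true =>
      rw [step2_true hx0]
      exact ⟨x0 :: T1, T0, hsuf, by simp [heq], by
        intro y hy
        rcases List.mem_cons.mp hy with rfl | hy
        · exact List.mem_cons_self
        · exact List.mem_cons_of_mem _ (hmem y hy)⟩
    | false =>
      cases hT' : T' with
      | nil =>
        rw [step2_false_nil hx0]
        exact ⟨[], [], List.nil_suffix, rfl, by simp⟩
      | cons t T'' =>
        rw [step2_false_cons hx0]
        subst hT'
        cases T1 with
        | nil =>
          simp only [List.nil_append] at heq
          refine ⟨[], T'', ?_, rfl, by simp⟩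
          exact (List.suffix_cons t T'').trans (heq ▸ hsuf)
        | cons u T1' =>
          simp only [List.cons_append] at heq
          refine ⟨T1', T0, hsuf, by simp [(List.cons.injEq _ _ _ _ ▸ heq).2], ?_⟩
          intro y hy
          exact List.mem_cons_of_mem _ (hmem y (List.mem_cons_of_mem _ hy))

end FEaux
namespace FEaux

lemma lemA : ∀ (s : List XX) (F0 : List XX) (p q : ℕ × ℤ),
    ((p, false) ∉ s) →
    (run s ([], (p, false) :: F0)).2.head? = some (p, false) →
    ∃ T, run s ([], (p, false) :: F0) = (T, (p, false) :: F0)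
      ∧ run s ([(q, true)], F0) = (T ++ [(q, true)], F0)
  | [], F0, p, q, _, _ => ⟨[], rfl, rfl⟩
  | x :: s, F0, p, q, hfresh, hhead => by
    have hfresh' : (p, false) ∉ s := fun h => hfresh (List.mem_cons_of_mem _ h)
    rw [run_cons] at hhead
    rcases hst : run s ([], (p, false) :: F0) with ⟨TA, FA⟩
    rw [hst] at hhead
    cases hx : x.2 with
    | true =>
      rw [step2_true hx] at hhead
      obtain ⟨T, hAeq, hBeq⟩ := lemA s F0 p q hfresh' (by rw [hst]; exact hhead)
      refine ⟨x :: T, ?_, ?_⟩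
      · rw [run_cons, hAeq, step2_true hx]
      · rw [run_cons, hBeq, step2_true hx]; simp
    | false =>
      cases TA with
      | nil =>
        rw [step2_false_nil hx] at hhead
        simp only [List.head?_cons, Option.some.injEq] at hhead
        exact absurd (hhead ▸ (List.mem_cons_self (a := x) (l := s))) hfresh
      | cons t TA' =>
        rw [step2_false_cons hx] at hhead
        obtain ⟨T, hAeq, hBeq⟩ := lemA s F0 p q hfresh' (by rw [hst]; exact hhead)
        have hTA : T = t :: TA' ∧ FA = (p, false) :: F0 := by
          rw [hst] at hAeq
          exact ⟨(Prod.mk.injEq _ _ _ _ ▸ hAeq).1.symm, (Prod.mk.injEq _ _ _ _ ▸ hAeq).2⟩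
        refine ⟨TA', ?_, ?_⟩
        · rw [run_cons, hAeq, hTA.1, step2_false_cons hx]
        · rw [run_cons, hBeq, hTA.1]
          have : (t :: TA') ++ [(q, true)] = t :: (TA' ++ [(q, true)]) := by simp
          rw [this, step2_false_cons hx]

lemma lemB : ∀ (s : List XX) (F0 : List XX) (p q : ℕ × ℤ),
    ((q, true) ∉ s) →
    (run s ([(q, true)], F0)).1.getLast? = some (q, true) →
    ∃ T, run s ([(q, true)], F0) = (T ++ [(q, true)], F0)
      ∧ run s ([], (p, false) :: F0) = (T, (p, false) :: F0)
  | [], F0, p, q, _, _ => ⟨[], rfl, rfl⟩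
  | x :: s, F0, p, q, hfresh, hlast => by
    have hfresh' : (q, true) ∉ s := fun h => hfresh (List.mem_cons_of_mem _ h)
    rw [run_cons] at hlast
    rcases hst : run s ([(q, true)], F0) with ⟨TB, FB⟩
    rw [hst] at hlast
    cases hx : x.2 with
    | true =>
      rw [step2_true hx] at hlast
      cases TB with
      | nil =>
        simp only [List.getLast?_singleton, Option.some.injEq] at hlast
        exact absurd (hlast ▸ (List.mem_cons_self (a := x) (l := s))) hfresh
      | cons u TB' =>
        rw [List.getLast?_cons_cons] at hlast
        obtain ⟨T, hBeq, hAeq⟩ := lemB s F0 p q hfresh' (by rw [hst]; exact hlast)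
        refine ⟨x :: T, ?_, ?_⟩
        · rw [run_cons, hBeq, step2_true hx]; simp
        · rw [run_cons, hAeq, step2_true hx]
    | false =>
      cases TB with
      | nil =>
        rw [step2_false_nil hx] at hlast
        simp at hlast
      | cons t TB' =>
        rw [step2_false_cons hx] at hlast
        cases hTB' : TB' with
        | nil => rw [hTB'] at hlast; simp at hlast
        | cons u TB'' =>
          subst hTB'
          have hlast' : (t :: u :: TB'').getLast? = some (q, true) := by
            rw [List.getLast?_cons_cons]; exact hlast
          obtain ⟨T, hBeq, hAeq⟩ := lemB s F0 p q hfresh' (by rw [hst]; exact hlast')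
          have hTB : T ++ [(q, true)] = t :: u :: TB'' ∧ FB = F0 := by
            rw [hst] at hBeq
            exact ⟨(Prod.mk.injEq _ _ _ _ ▸ hBeq).1.symm, (Prod.mk.injEq _ _ _ _ ▸ hBeq).2⟩
          cases hT : T with
          | nil => rw [hT] at hTB; simp at hTB
          | cons v T' =>
            subst hT
            have hv : v = t ∧ T' ++ [(q, true)] = u :: TB'' := by
              have := hTB.1
              simp only [List.cons_append, List.cons.injEq] at this
              exact ⟨this.1, this.2⟩
            refine ⟨T', ?_, ?_⟩
            · rw [run_cons, hBeq]
              have : (v :: T') ++ [(q, true)] = v :: (T' ++ [(q, true)]) := by simp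
              rw [this, step2_false_cons hx]
            · rw [run_cons, hAeq, step2_false_cons hx]

lemma find?_skip_true (T F : List XX) (hT : ∀ x ∈ T, x.2 = true) :
    List.find? (fun x => !x.2) (T ++ F) = List.find? (fun x => !x.2) F := by
  induction T with
  | nil => rfl
  | cons t T ih =>
    rw [List.cons_append, List.find?_cons_of_neg (p := fun x : XX => !x.2) (a := t) (by simp [hT t (List.mem_cons_self)])]
    exact ih fun x hx => hT x (List.mem_cons_of_mem _ hx)

lemma find?_false_head (F : List XX) (hF : ∀ x ∈ F, x.2 = false) :
    List.find? (fun x => !x.2) F = F.head? := by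
  cases F with
  | nil => rfl
  | cons f F => rw [List.find?_cons_of_pos (p := fun x : XX => !x.2) (a := f) (by simp [hF f (List.mem_cons_self)])]; rfl

lemma filter_TF (T F : List XX) (hT : ∀ x ∈ T, x.2 = true) (hF : ∀ x ∈ F, x.2 = false) :
    (T ++ F).filter (fun x => x.2) = T := by
  rw [List.filter_append, List.filter_eq_self.mpr hT,
    List.filter_eq_nil_iff.mpr (fun a ha => by simp [hF a ha]), List.append_nil]

end FEaux
namespace FEaux

/-- The strict ordering on sites used in `Enumerates`. -/
def rel (p q : ℕ × ℤ) : Prop := (q.1 : ℤ) + q.2 < (p.1 : ℤ) + p.2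

instance : IsTrans (ℕ × ℤ) rel := ⟨fun _ _ _ h h' => by unfold rel at *; omega⟩
instance : IsAntisymm (ℕ × ℤ) rel := ⟨fun _ _ h h' => by unfold rel at *; omega⟩

variable {n k : ℕ}

lemma enum_pairwise {Y : YD n k} {i : ℕ} {L : List (ℕ × ℤ)} (h : Enumerates Y i L) :
    L.Pairwise rel :=
  (List.isChain_iff_pairwise (R := rel)).mp h.2

lemma enum_nodup {Y : YD n k} {i : ℕ} {L : List (ℕ × ℤ)} (h : Enumerates Y i L) :
    L.Nodup :=
  (enum_pairwise h).imp fun hr => by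
    intro he; subst he; exact absurd hr (by unfold rel; omega)

lemma enum_eq {Y : YD n k} {i : ℕ} {L1 L2 : List (ℕ × ℤ)}
    (h1 : Enumerates Y i L1) (h2 : Enumerates Y i L2) : L1 = L2 := by
  have hperm : L1.Perm L2 := (List.perm_ext_iff_of_nodup (enum_nodup h1) (enum_nodup h2)).mpr
    (fun a => by rw [h1.1 a, h2.1 a])
  exact List.Perm.eq_of_pairwise' (enum_pairwise h1) (enum_pairwise h2) hperm

lemma pairwise_swap {s1 s2 : List (ℕ × ℤ)} {p q : ℕ × ℤ}
    (hd : (p.1 : ℤ) + p.2 = (q.1 : ℤ) + q.2)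
    (h : List.Pairwise rel (s1 ++ p :: s2)) : List.Pairwise rel (s1 ++ q :: s2) := by
  rw [List.pairwise_append] at h ⊢
  obtain ⟨h1, h2, h3⟩ := h
  rw [List.pairwise_cons] at h2 ⊢
  refine ⟨h1, ⟨fun b hb => ?_, h2.2⟩, fun a ha b hb => ?_⟩
  · have := h2.1 b hb; unfold rel at *; omega
  · rcases List.mem_cons.mp hb with rfl | hb
    · have := h3 a ha p (List.mem_cons_self); unfold rel at *; omega
    · exact h3 a ha b (List.mem_cons_of_mem _ hb)

lemma chain'_swap {s1 s2 : List (ℕ × ℤ)} {p q : ℕ × ℤ}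
    (hd : (p.1 : ℤ) + p.2 = (q.1 : ℤ) + q.2)
    (h : List.Chain' (fun p q : ℕ × ℤ => (q.1 : ℤ) + q.2 < (p.1 : ℤ) + p.2) (s1 ++ p :: s2)) :
    List.Chain' (fun p q : ℕ × ℤ => (q.1 : ℤ) + q.2 < (p.1 : ℤ) + p.2) (s1 ++ q :: s2) := by
  have h' : List.Chain' rel (s1 ++ p :: s2) := h
  have := (List.isChain_iff_pairwise (R := rel)).mpr
    (pairwise_swap hd (List.isChain_iff_pairwise.mp h'))
  exact this

lemma map_fst_sigL (Y : YD n k) (L : List (ℕ × ℤ)) : (sigL Y L).map Prod.fst = L := by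
  rw [sigL, List.map_map]
  have : (Prod.fst ∘ fun p : ℕ × ℤ => (p, if ConvexAt Y p.1 p.2 then true else false)) = id := rfl
  rw [this, List.map_id]

lemma mem_fst_sigL {Y : YD n k} {L : List (ℕ × ℤ)} {x : XX} (hx : x ∈ sigL Y L) :
    x.1 ∈ L := by
  obtain ⟨a, ha, rfl⟩ := List.mem_map.mp hx
  exact ha

end FEaux
namespace FEaux

lemma sigL_append {n k : ℕ} (Y : YD n k) (a b : List (ℕ × ℤ)) :
    sigL Y (a ++ b) = sigL Y a ++ sigL Y b := List.map_append

lemma sigL_cons {n k : ℕ} (Y : YD n k) (x : ℕ × ℤ) (b : List (ℕ × ℤ)) :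
    sigL Y (x :: b) = (x, if ConvexAt Y x.1 x.2 then true else false) :: sigL Y b := rfl


lemma core {n k : ℕ} (hn : 0 < n) {i : ℕ} {Y Y' : YD n k} {L L' : List (ℕ × ℤ)}
    (hL : Enumerates Y i L) (hL' : Enumerates Y' i L')
    (l : ℕ) (c : ℤ)
    (hYl : Y.y l = c) (hcc : l = 0 ∨ Y.y (l-1) < c)
    (hY' : Y'.y = Function.update Y.y l (c-1))
    (hcol : colour n l c = i) :
    (ftildeSite Y i L = some (l, c) → etildeSite Y' i L' = some (l+1, c-1)) ∧
    (etildeSite Y' i L' = some (l+1, c-1) → ftildeSite Y i L = some (l, c)) := by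
  have hconcp : ConcaveAt Y l c := geo_concave hYl hcc
  have hnconvp : ¬ConvexAt Y l c := geo_notconvex hYl
  have hconvq : ConvexAt Y' (l+1) (c-1) := geo_convex' hYl hY'
  have hcolq : colour n (l+1) (c-1) = i :=
    (colour_congr (n := n) (by push_cast; ring)).trans hcol
  have hpL : (l, c) ∈ L := (hL.1 (l, c)).mpr ⟨Or.inl hconcp, hcol⟩
  obtain ⟨s1, s2, hLs⟩ := List.append_of_mem hpL
  have hPL : L.Pairwise rel := enum_pairwise hL
  rw [hLs, List.pairwise_append] at hPL
  obtain ⟨hP1, hP2', hcross⟩ := hPL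
  rw [List.pairwise_cons] at hP2'
  obtain ⟨hps2, hP2⟩ := hP2'
  have hs1 : ∀ x ∈ s1, (l:ℤ) + c < (x.1:ℤ) + x.2 := fun x hx =>
    hcross x hx (l, c) (List.mem_cons_self)
  have hs2 : ∀ x ∈ s2, (x.1:ℤ) + x.2 < (l:ℤ) + c := fun x hx => hps2 x hx
  have hp1 : (l, c) ∉ s1 := fun h => by have := hs1 _ h; simp at this
  have hp2 : (l, c) ∉ s2 := fun h => by have := hs2 _ h; simp at this
  have hq1 : (l+1, c-1) ∉ s1 := fun h => by have := hs1 _ h; push_cast at this; omega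
  have hq2 : (l+1, c-1) ∉ s2 := fun h => by have := hs2 _ h; push_cast at this; omega
  have hmem1 : ∀ x ∈ s1, x ∈ L := fun x hx => by
    rw [hLs]; exact List.mem_append_left _ hx
  have hmem2 : ∀ x ∈ s2, x ∈ L := fun x hx => by
    rw [hLs]; exact List.mem_append_right _ (List.mem_cons_of_mem _ hx)
  have hswap : ∀ x : ℕ × ℤ, ((x.1:ℤ) + x.2 ≠ (l:ℤ) + c) → colour n x.1 x.2 = i →
      ((ConcaveAt Y x.1 x.2 ↔ ConcaveAt Y' x.1 x.2) ∧
       (ConvexAt Y x.1 x.2 ↔ ConvexAt Y' x.1 x.2)) := by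
    intro x hdx hcolx
    have hco : colour n x.1 x.2 = colour n l c := hcolx.trans hcol.symm
    have hp' : ¬(x.1 = l ∧ x.2 = c) := by
      rintro ⟨h1, h2⟩; exact hdx (by rw [h1, h2])
    have hq' : ¬(x.1 = l + 1 ∧ x.2 = c - 1) := by
      rintro ⟨h1, h2⟩; exact hdx (by rw [h1, h2]; push_cast; ring)
    exact ⟨geo_concave_iff hn hYl hcc hY' hco hp' hq',
      geo_convex_iff hn hYl hcc hY' hco hp' hq'⟩
  -- the corner sets swap
  have hqL' : (l+1, c-1) ∈ L' := (hL'.1 (l+1, c-1)).mpr ⟨Or.inr hconvq, hcolq⟩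
  have hdiffL' : ∀ x ∈ L', x ≠ (l+1, c-1) → (x.1:ℤ) + x.2 ≠ (l:ℤ) + c := by
    intro x hx hne
    have hpw : L'.Pairwise (fun a b : ℕ × ℤ => (a.1:ℤ) + a.2 ≠ (b.1:ℤ) + b.2) :=
      (enum_pairwise hL').imp (fun h => by unfold rel at h; omega)
    have : Std.Symm (fun a b : ℕ × ℤ => (a.1:ℤ) + a.2 ≠ (b.1:ℤ) + b.2) := ⟨fun a b h => Ne.symm h⟩
    have := hpw.forall hx hqL' hne
    push_cast at this ⊢
    omega
  -- the candidate enumeration of Y'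
  have hcand : Enumerates Y' i (s1 ++ (l+1, c-1) :: s2) := by
    constructor
    · intro x
      constructor
      · intro hx
        rcases List.mem_append.mp hx with hx1 | hx2
        · have hxL := (hL.1 x).mp (hmem1 x hx1)
          have hd : (x.1:ℤ) + x.2 ≠ (l:ℤ) + c := by have := hs1 x hx1; omega
          obtain ⟨hcor, hcolx⟩ := hxL
          refine ⟨?_, hcolx⟩
          rcases hcor with h | h
          · exact Or.inl ((hswap x hd hcolx).1.mp h)
          · exact Or.inr ((hswap x hd hcolx).2.mp h)
        · rcases List.mem_cons.mp hx2 with rfl | hx2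
          · exact ⟨Or.inr hconvq, hcolq⟩
          · have hxL := (hL.1 x).mp (hmem2 x hx2)
            have hd : (x.1:ℤ) + x.2 ≠ (l:ℤ) + c := by have := hs2 x hx2; omega
            obtain ⟨hcor, hcolx⟩ := hxL
            refine ⟨?_, hcolx⟩
            rcases hcor with h | h
            · exact Or.inl ((hswap x hd hcolx).1.mp h)
            · exact Or.inr ((hswap x hd hcolx).2.mp h)
      · rintro ⟨hcor, hcolx⟩
        by_cases hxq : x = (l+1, c-1)
        · subst hxq
          exact List.mem_append_right _ (List.mem_cons_self)
        · by_cases hxp : x = (l, c)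
          · subst hxp
            exact absurd hcor (geo_notcorner'_p hYl hcc hY')
          · have hxL' : x ∈ L' := (hL'.1 x).mpr ⟨hcor, hcolx⟩
            have hd : (x.1:ℤ) + x.2 ≠ (l:ℤ) + c := hdiffL' x hxL' hxq
            have hcorY : CornerAt Y x.1 x.2 := by
              rcases hcor with h | h
              · exact Or.inl ((hswap x hd hcolx).1.mpr h)
              · exact Or.inr ((hswap x hd hcolx).2.mpr h)
            have hxL : x ∈ L := (hL.1 x).mpr ⟨hcorY, hcolx⟩
            rw [hLs] at hxL
            rcases List.mem_append.mp hxL with h | h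
            · exact List.mem_append_left _ h
            · rcases List.mem_cons.mp h with rfl | h
              · exact absurd rfl hxp
              · exact List.mem_append_right _ (List.mem_cons_of_mem _ h)
    · refine chain'_swap (p := (l, c)) ?_ ?_
      · push_cast; ring
      · rw [← hLs]; exact hL.2
  have hL'eq : L' = s1 ++ (l+1, c-1) :: s2 := enum_eq hL' hcand
  -- signature lists
  have hsig1 : sigL Y' s1 = sigL Y s1 := by
    refine List.map_congr_left (fun a ha => ?_)
    have hd : (a.1:ℤ) + a.2 ≠ (l:ℤ) + c := by have := hs1 a ha; omega
    have hcola := ((hL.1 a).mp (hmem1 a ha)).2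
    have hiff := (hswap a hd hcola).2
    exact congrArg (fun b => (a, b)) (if_congr hiff.symm rfl rfl)
  have hsig2 : sigL Y' s2 = sigL Y s2 := by
    refine List.map_congr_left (fun a ha => ?_)
    have hd : (a.1:ℤ) + a.2 ≠ (l:ℤ) + c := by have := hs2 a ha; omega
    have hcola := ((hL.1 a).mp (hmem2 a ha)).2
    have hiff := (hswap a hd hcola).2
    exact congrArg (fun b => (a, b)) (if_congr hiff.symm rfl rfl)
  have hnconvp' : ¬ ConvexAt Y ((l, c) : ℕ × ℤ).1 ((l, c) : ℕ × ℤ).2 := hnconvp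
  have hconvq' : ConvexAt Y' ((l+1, c-1) : ℕ × ℤ).1 ((l+1, c-1) : ℕ × ℤ).2 := hconvq
  have hsigY : sigL Y L = sigL Y s1 ++ ((l, c), false) :: sigL Y s2 := by
    rw [hLs, sigL_append, sigL_cons, if_neg hnconvp']
  have hsigY' : sigL Y' L' = sigL Y s1 ++ ((l+1, c-1), true) :: sigL Y s2 := by
    rw [hL'eq, sigL_append, sigL_cons, if_pos hconvq', hsig1, hsig2]
  set A1 := sigL Y s1 with hA1
  set A2 := sigL Y s2 with hA2
  -- freshness in XX form
  have hfreshA1p : ((l, c), false) ∉ A1 := fun h => hp1 (mem_fst_sigL h)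
  have hfreshA1q : ((l+1, c-1), true) ∉ A1 := fun h => hq1 (mem_fst_sigL h)
  -- the tail state
  rcases h2st : run A2 ([], []) with ⟨T2, F2⟩
  obtain ⟨-, hT2, hF2⟩ := bridge A2 [] [] (by simp) (by simp)
  rw [h2st] at hT2 hF2
  have memF2 : ∀ x ∈ F2, x ∈ A2 := fun x hx =>
    (mem_run_snd A2 ([], []) x (by rw [h2st]; exact hx)).resolve_right (by simp)
  have memT2 : ∀ x ∈ T2, x ∈ A2 := fun x hx =>
    (mem_run_fst A2 ([], []) x (by rw [h2st]; exact hx)).resolve_right (by simp)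
  constructor
  · -- FORWARD
    intro hf
    simp only [ftildeSite, hsigY] at hf
    obtain ⟨hfold, hTfin, hFfin⟩ :=
      bridge (A1 ++ ((l, c), false) :: A2) [] [] (by simp) (by simp)
    rcases hrs : run (A1 ++ ((l, c), false) :: A2) ([], []) with ⟨RT, RF⟩
    rw [hrs] at hfold hTfin hFfin
    simp only [List.nil_append] at hfold
    rw [reduceSig_def, hfold, find?_skip_true RT RF hTfin, find?_false_head RF hFfin] at hf
    rcases hRF : RF with _ | ⟨f, RF'⟩
    · rw [hRF] at hf; simp at hf
    · rw [hRF] at hf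
      simp only [List.head?_cons, Option.map_some] at hf
      have hff : f = ((l, c), false) := by
        have h2 := hFfin f (by rw [hRF]; exact List.mem_cons_self)
        have h1 : f.1 = (l, c) := by injection hf
        exact Prod.ext h1 h2
      subst hff
      -- the state right after inserting (p,false)
      have hrun : run (A1 ++ (((l, c), false) : XX) :: A2) ([], [])
          = run A1 (step2 ((l, c), false) (T2, F2)) := by
        rw [run_append, run_cons, h2st]
      cases hT2' : T2 with
      | cons t T2' =>
        exfalso
        rw [hT2', step2_false_cons rfl] at hrun
        have hmem : (((l, c), false) : XX) ∈ RF := by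
          rw [hRF]; exact List.mem_cons_self
        have : (((l, c), false) : XX) ∈ A1 ∨ (((l, c), false) : XX) ∈ F2 := by
          have := mem_run_snd A1 (T2', F2) _ (by rw [← hrun, hrs]; exact hmem)
          simpa using this
        rcases this with h | h
        · exact hfreshA1p h
        · exact hp2 (mem_fst_sigL (memF2 _ h))
      | nil =>
        rw [hT2', step2_false_nil rfl] at hrun
        obtain ⟨T, hAeq, hBeq⟩ := lemA A1 F2 (l, c) (l+1, c-1) hfreshA1p
          (by rw [← hrun, hrs, hRF]; rfl)
        -- compute the reduced signature of Y'
        obtain ⟨hfold', hTfin', hFfin'⟩ :=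
          bridge (A1 ++ ((l+1, c-1), true) :: A2) [] [] (by simp) (by simp)
        have hrun' : run (A1 ++ (((l+1, c-1), true) : XX) :: A2) ([], [])
            = (T ++ [((l+1, c-1), true)], F2) := by
          rw [run_append, run_cons, h2st, hT2', step2_true rfl, hBeq]
        rw [hrun'] at hfold' hTfin' hFfin'
        simp only [List.nil_append] at hfold'
        simp only [etildeSite, hsigY']
        rw [reduceSig_def, hfold', filter_TF _ _ hTfin' hFfin', List.getLast?_concat]
        rfl
  · -- BACKWARD
    intro he
    simp only [etildeSite, hsigY'] at he
    obtain ⟨hfold', hTfin', hFfin'⟩ :=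
      bridge (A1 ++ ((l+1, c-1), true) :: A2) [] [] (by simp) (by simp)
    rcases hrs' : run (A1 ++ ((l+1, c-1), true) :: A2) ([], []) with ⟨RT', RF'⟩
    rw [hrs'] at hfold' hTfin' hFfin'
    simp only [List.nil_append] at hfold'
    rw [reduceSig_def, hfold', filter_TF _ _ hTfin' hFfin'] at he
    obtain ⟨x0, hx0, hx0fst⟩ := Option.map_eq_some_iff.mp he
    have hx0mem : x0 ∈ RT' := by
      obtain ⟨ys, hys⟩ := List.getLast?_eq_some_iff.mp hx0
      have hys' : RT' = ys ++ [x0] := hys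
      rw [hys']; exact List.mem_append_right _ (List.mem_cons_self)
    have hx0eq : x0 = ((l+1, c-1), true) := Prod.ext hx0fst (hTfin' x0 hx0mem)
    subst hx0eq
    have hrun' : run (A1 ++ (((l+1, c-1), true) : XX) :: A2) ([], [])
        = run A1 (((l+1, c-1), true) :: T2, F2) := by
      rw [run_append, run_cons, h2st, step2_true rfl]
    -- show T2 = []
    have hT2nil : T2 = [] := by
      obtain ⟨T1, T0, hsuf, heq, hmemT1⟩ := run_fst_suffix A1 (((l+1, c-1), true) :: T2, F2)
      have heq' : RT' = T1 ++ T0 := by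
        have h := heq
        rw [← hrun', hrs'] at h
        exact h
      rcases hT0 : T0 with _ | ⟨t0, T0'⟩
      · exfalso
        rw [heq', hT0, List.append_nil] at hx0
        obtain ⟨ys, hys⟩ := List.getLast?_eq_some_iff.mp hx0
        have hys' : T1 = ys ++ [((l+1, c-1), true)] := hys
        have : (((l+1, c-1), true) : XX) ∈ T1 := by
          rw [hys']; exact List.mem_append_right _ (List.mem_cons_self)
        exact hfreshA1q (hmemT1 _ this)
      · -- getLast? T0 = some qt
        have hT0ne : T0 ≠ [] := by rw [hT0]; simp
        have hglT0 : T0.getLast? = some ((l+1, c-1), true) := by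
          rw [heq', List.getLast?_append] at hx0
          rcases hgl : T0.getLast? with _ | v
          · exact absurd hgl (by rw [hT0]; simp [List.getLast?_eq_none_iff])
          · rw [hgl] at hx0; simpa using hx0
        obtain ⟨pre, hpre⟩ := hsuf
        have hpre' : pre ++ T0 = (((l+1, c-1), true) : XX) :: T2 := hpre
        have hglC : ((((l+1, c-1), true) : XX) :: T2).getLast? = some ((l+1, c-1), true) := by
          rw [← hpre', List.getLast?_append, hglT0]; rfl
        cases hT2c : T2 with
        | nil => rfl
        | cons u T2' =>
          exfalso
          rw [hT2c, List.getLast?_cons_cons] at hglC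
          have : (((l+1, c-1), true) : XX) ∈ T2 := by
            obtain ⟨ys, hys⟩ := List.getLast?_eq_some_iff.mp hglC
            rw [hT2c, hys]
            exact List.mem_append_right _ (List.mem_cons_self)
          exact hq2 (mem_fst_sigL (memT2 _ this))
    subst hT2nil
    obtain ⟨T, hBeq, hAeq⟩ := lemB A1 F2 (l, c) (l+1, c-1) hfreshA1q
      (by
        have : run A1 ([((l+1, c-1), true)], F2) = (RT', RF') := by
          rw [← hrun', hrs']
        rw [this]
        exact hx0)
    -- compute the reduced signature of Y
    obtain ⟨hfold, hTfin, hFfin⟩ :=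
      bridge (A1 ++ ((l, c), false) :: A2) [] [] (by simp) (by simp)
    have hrun : run (A1 ++ (((l, c), false) : XX) :: A2) ([], [])
        = (T, ((l, c), false) :: F2) := by
      rw [run_append, run_cons, h2st, step2_false_nil rfl, hAeq]
    rw [hrun] at hfold hTfin hFfin
    simp only [List.nil_append] at hfold
    simp only [ftildeSite, hsigY]
    rw [reduceSig_def, hfold, find?_skip_true _ _ hTfin, find?_false_head _ hFfin]
    rfl

end FEaux
/-- For every `k ∈ I`, every `i ∈ I` and all Young diagrams `Y, Y'` of charge
`k`: `f̃_i Y = Y'` if and only if `ẽ_i Y' = Y`.  Here `f̃_i Y = Y'` means that `f̃_i` adds a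
box to `Y` at the site `p` selected by the signature rule and `Y'` is the result, and
`ẽ_i Y' = Y` means that `ẽ_i` removes the convex corner of `Y'` at the site `p` selected by
the signature rule and `Y` is the result. -/
theorem ftilde_etilde_inverse (n : ℕ) (hn : 2 ≤ n) (k : ℕ) (hk : k ≤ n) (i : ℕ) (hi : i ≤ n)
    (Y Y' : YD n k) (L L' : List (ℕ × ℤ))
    (hL : Enumerates Y i L) (hL' : Enumerates Y' i L') :
    (∃ p : ℕ × ℤ, ftildeSite Y i L = some p ∧
        Y'.y = Function.update Y.y p.1 (Y.y p.1 - 1))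
      ↔ (∃ p : ℕ × ℤ, etildeSite Y' i L' = some p ∧
        Y.y = Function.update Y'.y (p.1 - 1) (Y'.y (p.1 - 1) + 1)) := by
  have hn0 : 0 < n := by omega
  constructor
  · rintro ⟨p, hf, hupd⟩
    obtain ⟨x0, hfind, hx0fst⟩ := Option.map_eq_some_iff.mp hf
    have hx0f : x0.2 = false := by
      have := List.find?_some hfind
      simpa using this
    have hx0mem : x0 ∈ sigL Y L := by
      have hmem := List.mem_of_find?_eq_some hfind
      obtain ⟨hfold, hT, hF⟩ := FEaux.bridge (sigL Y L) [] [] (by simp) (by simp)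
      simp only [List.nil_append] at hfold
      rw [FEaux.reduceSig_def, hfold] at hmem
      rcases List.mem_append.mp hmem with h | h
      · rcases FEaux.mem_run_fst _ _ _ h with h | h
        · exact h
        · simp at h
      · rcases FEaux.mem_run_snd _ _ _ h with h | h
        · exact h
        · simp at h
    obtain ⟨a, haL, hax⟩ := List.mem_map.mp hx0mem
    have hap : a = p := by rw [← hx0fst, ← hax]
    subst hap
    have htag : (if ConvexAt Y a.1 a.2 then true else false) = false := by
      have h := congrArg Prod.snd hax
      rw [hx0f] at h
      exact h
    have hnconv : ¬ ConvexAt Y a.1 a.2 := by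
      by_contra h
      rw [if_pos h] at htag
      simp at htag
    obtain ⟨hcor, hcola⟩ := (hL.1 a).mp haL
    have hconc : ConcaveAt Y a.1 a.2 := hcor.resolve_right hnconv
    rw [FEaux.concaveAt_iff] at hconc
    obtain ⟨hz, hcc⟩ := hconc
    have hYl : Y.y a.1 = a.2 := hz.symm
    have hcc' : a.1 = 0 ∨ Y.y (a.1 - 1) < a.2 := by
      rcases hcc with h | h
      · exact Or.inl h
      · exact Or.inr (by omega)
    have hY'u : Y'.y = Function.update Y.y a.1 (a.2 - 1) := by rw [hupd, hYl]
    have hco := FEaux.core hn0 hL hL' a.1 a.2 hYl hcc' hY'u hcola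
    have hf' : ftildeSite Y i L = some (a.1, a.2) := by rw [Prod.mk.eta]; exact hf
    have he := hco.1 hf'
    refine ⟨(a.1 + 1, a.2 - 1), he, ?_⟩
    show Y.y = Function.update Y'.y a.1 (Y'.y a.1 + 1)
    have h1 : Y'.y a.1 = a.2 - 1 := by rw [hY'u, Function.update_self]
    rw [h1, hY'u, Function.update_idem]
    have h2 : a.2 - 1 + 1 = a.2 := by ring
    rw [h2, ← hYl, Function.update_eq_self]
  · rintro ⟨p, he, hupd⟩
    obtain ⟨x0, hlast, hx0fst⟩ := Option.map_eq_some_iff.mp he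
    have hx0mem' : x0 ∈ (reduceSig (sigL Y' L')).filter (fun x => x.2) := by
      obtain ⟨ys, hys⟩ := List.getLast?_eq_some_iff.mp hlast
      rw [hys]
      exact List.mem_append_right _ (List.mem_cons_self)
    have hx0t : x0.2 = true := by
      have := (List.mem_filter.mp hx0mem').2
      simpa using this
    have hx0mem : x0 ∈ sigL Y' L' := by
      have hmem := (List.mem_filter.mp hx0mem').1
      obtain ⟨hfold, hT, hF⟩ := FEaux.bridge (sigL Y' L') [] [] (by simp) (by simp)
      simp only [List.nil_append] at hfold
      rw [FEaux.reduceSig_def, hfold] at hmem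
      rcases List.mem_append.mp hmem with h | h
      · rcases FEaux.mem_run_fst _ _ _ h with h | h
        · exact h
        · simp at h
      · rcases FEaux.mem_run_snd _ _ _ h with h | h
        · exact h
        · simp at h
    obtain ⟨a, haL', hax⟩ := List.mem_map.mp hx0mem
    have hap : a = p := by rw [← hx0fst, ← hax]
    subst hap
    have htag : (if ConvexAt Y' a.1 a.2 then true else false) = true := by
      have h := congrArg Prod.snd hax
      rw [hx0t] at h
      exact h
    have hconv : ConvexAt Y' a.1 a.2 := by
      by_contra h
      rw [if_neg h] at htag
      simp at htag
    have hcola : colour n a.1 a.2 = i := ((hL'.1 a).mp haL').2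
    obtain ⟨m, hm1, hlt, hz⟩ := hconv
    have hupd'' : Y.y = Function.update Y'.y m (Y'.y m + 1) := by
      rw [hm1] at hupd
      exact hupd
    have hYl : Y.y m = Y'.y m + 1 := by rw [hupd'', Function.update_self]
    have hcc' : m = 0 ∨ Y.y (m - 1) < Y'.y m + 1 := by
      rcases Nat.eq_zero_or_pos m with h | h
      · exact Or.inl h
      · refine Or.inr ?_
        have h1 : Y.y (m - 1) = Y'.y (m - 1) := by
          rw [hupd'', Function.update_of_ne (by omega)]
        have h2 : Y'.y (m - 1) ≤ Y'.y m := Y'.mono (by omega)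
        omega
    have hY'u : Y'.y = Function.update Y.y m (Y'.y m + 1 - 1) := by
      rw [hupd'', Function.update_idem]
      have h2 : Y'.y m + 1 - 1 = Y'.y m := by ring
      rw [h2, Function.update_eq_self]
    have hcolp : colour n m (Y'.y m + 1) = i := by
      refine (FEaux.colour_congr (a' := a.1) (z' := a.2) ?_).trans hcola
      rw [hm1, hz]
      push_cast
      ring
    have hco := FEaux.core hn0 hL hL' m (Y'.y m + 1) hYl hcc' hY'u hcolp
    have hpe : a = (m + 1, Y'.y m + 1 - 1) := by
      refine Prod.ext hm1 ?_
      rw [hz]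
      show Y'.y m = Y'.y m + 1 - 1
      ring
    have he' : etildeSite Y' i L' = some (m + 1, Y'.y m + 1 - 1) := by rw [← hpe]; exact he
    have hff := hco.2 he'
    refine ⟨(m, Y'.y m + 1), hff, ?_⟩
    show Y'.y = Function.update Y.y m (Y.y m - 1)
    rw [hYl]
    exact hY'u


end
end

section
/- Let Y be a Young diagram of charge k and i ∈ I with f̃_i Y ≠ 0. Then f̃_i Y is a Young diagram of charge k with b_i(f̃_i Y) = b_i(Y) + 1 and b_j(f̃_i Y) = b_j(Y) for all j ≠ i, and cc_j(f̃_i Y) − cx_j(f̃_i Y) = (cc_j(Y) − cx_j(Y)) − a_{ji} for every j ∈ I. -/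
open scoped Classical

noncomputable section

variable {n k : ℕ}

/-! ### Auxiliary machinery -/

/-- Colour as a function of the diagonal `d = l + z`. -/
def colourD (n : ℕ) (d : ℤ) : ℕ :=
  let r := (d % (2 * (n : ℤ))).toNat
  if r ≤ n then r else 2 * n - r

lemma colour_eq (n l : ℕ) (z : ℤ) : colour n l z = colourD n ((l : ℤ) + z) := rfl

/-- Colour as a function of the residue. -/
def cD (n r : ℕ) : ℕ := if r ≤ n then r else 2 * n - r

lemma colourD_eq (n : ℕ) (d : ℤ) : colourD n d = cD n ((d % (2 * (n : ℤ))).toNat) := rfl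

lemma emod_toNat (n : ℕ) (hn : 1 ≤ n) (d : ℤ) :
    d % (2 * (n : ℤ)) = (((d % (2 * (n : ℤ))).toNat : ℕ) : ℤ) :=
  (Int.toNat_of_nonneg (Int.emod_nonneg d (by positivity))).symm

lemma colourD_add_one (n : ℕ) (hn : 1 ≤ n) (d : ℤ) :
    colourD n (d + 1) = cD n (((d % (2 * (n : ℤ))).toNat + 1) % (2 * n)) := by
  have h2 : (1:ℤ) < 2 * (n:ℤ) := by exact_mod_cast (by omega : 1 < 2 * n)
  have hr : d % (2 * (n:ℤ)) = ((d % (2 * (n:ℤ))).toNat : ℤ) := emod_toNat n hn d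
  rw [colourD_eq]
  congr 1
  have key : (d + 1) % (2 * (n : ℤ)) = ((((d % (2 * (n : ℤ))).toNat + 1) % (2 * n) : ℕ) : ℤ) := by
    rw [Int.add_emod, Int.emod_eq_of_lt (by norm_num) h2]
    conv_lhs => rw [hr]
    push_cast
    ring_nf
  rw [key, Int.toNat_natCast]

lemma colourD_sub_one (n : ℕ) (hn : 1 ≤ n) (d : ℤ) :
    colourD n (d - 1) = cD n (((d % (2 * (n : ℤ))).toNat + (2 * n - 1)) % (2 * n)) := by
  have hr : d % (2 * (n:ℤ)) = ((d % (2 * (n:ℤ))).toNat : ℤ) := emod_toNat n hn d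
  set r : ℕ := (d % (2 * (n:ℤ))).toNat with hrdef
  rw [colourD_eq]
  congr 1
  have hd : d = 2 * (n:ℤ) * (d / (2 * (n:ℤ))) + (r : ℤ) := by
    rw [← hr]; exact (Int.mul_ediv_add_emod d _).symm
  have key : (d - 1) % (2 * (n : ℤ)) = (((r + (2 * n - 1)) % (2 * n) : ℕ) : ℤ) := by
    have h2 : d - 1 = ((r + (2 * n - 1) : ℕ) : ℤ) + (2 * (n:ℤ)) * (d / (2 * (n:ℤ)) - 1) := by
      conv_lhs => rw [hd]
      push_cast [Nat.cast_sub (show 1 ≤ 2 * n by omega)]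
      ring
    rw [h2, Int.add_mul_emod_self_left, Int.natCast_mod]
    push_cast
    ring_nf
  rw [key, Int.toNat_natCast]

lemma emod_toNat_lt (n : ℕ) (hn : 1 ≤ n) (d : ℤ) : (d % (2 * (n : ℤ))).toNat < 2 * n := by
  have h1 : d % (2 * (n:ℤ)) < 2 * (n:ℤ) := Int.emod_lt_of_pos d (by positivity)
  omega

/-- Indicator. -/
def indZ (j c : ℕ) : ℤ := if j = c then 1 else 0

lemma mod_helper (M a b : ℕ) (h : a = b + M ∨ a = b) (hb : b < M) : a % M = b := by
  rcases h with rfl | rfl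
  · rw [Nat.add_mod_right]; exact Nat.mod_eq_of_lt hb
  · exact Nat.mod_eq_of_lt hb

lemma cD_eval (n r v : ℕ) (h : (r ≤ n ∧ v = r) ∨ (¬ r ≤ n ∧ v = 2 * n - r)) : cD n r = v := by
  unfold cD; split_ifs with h' <;> omega

set_option maxHeartbeats 1000000 in
lemma key_arith (n : ℕ) (hn : 2 ≤ n) (r j : ℕ) (hr : r < 2 * n) (hj : j ≤ n) :
    indZ j (cD n ((r + (2 * n - 1)) % (2 * n))) + indZ j (cD n ((r + 1) % (2 * n)))
      - 2 * indZ j (cD n r) = - cartan n j (cD n r) := by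
  rcases eq_or_ne r 0 with rfl | hr0
  · rw [mod_helper _ _ (2*n-1) (by omega) (by omega),
      mod_helper _ _ 1 (by omega) (by omega),
      cD_eval n (2*n-1) 1 (by omega), cD_eval n 1 1 (by omega), cD_eval n 0 0 (by omega)]
    simp only [cartan, indZ]
    split_ifs <;> (try simp only [true_and, and_true, false_and, and_false, false_or, or_false] at *) <;> omega
  · rcases eq_or_ne r (2 * n - 1) with rfl | hr1
    · rw [mod_helper _ _ (2*n-2) (by omega) (by omega),
        mod_helper _ _ 0 (by omega) (by omega),
        cD_eval n (2*n-2) 2 (by omega), cD_eval n 0 0 (by omega),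
        cD_eval n (2*n-1) 1 (by omega)]
      simp only [cartan, indZ]
      split_ifs <;> (try simp only [true_and, and_true, false_and, and_false, false_or, or_false] at *) <;> omega
    · rw [mod_helper _ _ (r-1) (by omega) (by omega),
        mod_helper _ _ (r+1) (by omega) (by omega)]
      rcases lt_or_ge r n with hrn | hrn
      · rw [cD_eval n (r-1) (r-1) (by omega), cD_eval n (r+1) (r+1) (by omega),
          cD_eval n r r (by omega)]
        simp only [cartan, indZ]
        split_ifs <;> (try simp only [true_and, and_true, false_and, and_false, false_or, or_false] at *) <;> omega
      · rcases eq_or_ne r n with heq | hrn2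
        · rw [cD_eval n (r-1) (n-1) (by omega), cD_eval n (r+1) (n-1) (by omega),
            cD_eval n r n (by omega)]
          simp only [cartan, indZ]
          split_ifs <;> (try simp only [true_and, and_true, false_and, and_false, false_or, or_false] at *) <;> omega
        · rcases eq_or_ne r (n+1) with rfl | hrn3
          · rw [cD_eval n (n+1-1) n (by omega), cD_eval n (n+1+1) (n-2) (by omega),
              cD_eval n (n+1) (n-1) (by omega)]
            simp only [cartan, indZ]
            split_ifs <;> (try simp only [true_and, and_true, false_and, and_false, false_or, or_false] at *) <;> omega
          · rw [cD_eval n (r-1) (2*n-r+1) (by omega), cD_eval n (r+1) (2*n-r-1) (by omega),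
              cD_eval n r (2*n-r) (by omega)]
            simp only [cartan, indZ]
            split_ifs <;> (try simp only [true_and, and_true, false_and, and_false, false_or, or_false] at *) <;> omega

/-! ### Corner characterizations -/

lemma concaveAt_iff (Y : YD n k) (l : ℕ) (z : ℤ) :
    ConcaveAt Y l z ↔ z = Y.y l ∧ (l = 0 ∨ Y.y (l - 1) < Y.y l) := by
  constructor
  · rintro (⟨rfl, rfl⟩ | ⟨m, rfl, hlt, rfl⟩)
    · exact ⟨rfl, Or.inl rfl⟩
    · exact ⟨rfl, Or.inr (by simpa using hlt)⟩
  · rintro ⟨rfl, hc⟩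
    cases l with
    | zero => exact Or.inl ⟨rfl, rfl⟩
    | succ m => exact Or.inr ⟨m, rfl, by simpa using hc.resolve_left (by omega), rfl⟩

lemma convexAt_iff (Y : YD n k) (l : ℕ) (z : ℤ) :
    ConvexAt Y l z ↔ 1 ≤ l ∧ z = Y.y (l - 1) ∧ Y.y (l - 1) < Y.y l := by
  constructor
  · rintro ⟨m, rfl, hlt, rfl⟩
    exact ⟨by omega, by simp, by simpa using hlt⟩
  · rintro ⟨hl, rfl, hlt⟩
    refine ⟨l - 1, by omega, ?_, rfl⟩
    rwa [show l - 1 + 1 = l by omega]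

/-- The set of indices of `j`-coloured concave corners. -/
def ccL (Y : YD n k) (j : ℕ) : Set ℕ :=
  {m | (m = 0 ∨ Y.y (m - 1) < Y.y m) ∧ colourD n ((m : ℤ) + Y.y m) = j}

/-- The set of indices of `j`-coloured convex corners. -/
def cxL (Y : YD n k) (j : ℕ) : Set ℕ :=
  {m | 1 ≤ m ∧ Y.y (m - 1) < Y.y m ∧ colourD n ((m : ℤ) + Y.y (m - 1)) = j}

lemma cc_eq (Y : YD n k) (j : ℕ) : cc j Y = (ccL Y j).ncard := by
  have himg : {p : ℕ × ℤ | ConcaveAt Y p.1 p.2 ∧ colour n p.1 p.2 = j}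
      = (fun m => (m, Y.y m)) '' ccL Y j := by
    ext ⟨l, z⟩
    simp only [Set.mem_setOf_eq, Set.mem_image, concaveAt_iff, colour_eq, ccL, Prod.mk.injEq]
    constructor
    · rintro ⟨⟨rfl, hc⟩, hcol⟩
      exact ⟨l, ⟨hc, hcol⟩, rfl, rfl⟩
    · rintro ⟨m, ⟨hc, hcol⟩, rfl, rfl⟩
      exact ⟨⟨rfl, hc⟩, hcol⟩
  rw [cc, himg, Set.ncard_image_of_injective _ (fun a b hab => congrArg Prod.fst hab)]

lemma cx_eq (Y : YD n k) (j : ℕ) : cx j Y = (cxL Y j).ncard := by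
  have himg : {p : ℕ × ℤ | ConvexAt Y p.1 p.2 ∧ colour n p.1 p.2 = j}
      = (fun m => (m, Y.y (m - 1))) '' cxL Y j := by
    ext ⟨l, z⟩
    simp only [Set.mem_setOf_eq, Set.mem_image, convexAt_iff, colour_eq, cxL, Prod.mk.injEq]
    constructor
    · rintro ⟨⟨hl, rfl, hc⟩, hcol⟩
      exact ⟨l, ⟨hl, hc, hcol⟩, rfl, rfl⟩
    · rintro ⟨m, ⟨hl, hc, hcol⟩, rfl, rfl⟩
      exact ⟨⟨hl, rfl, hc⟩, hcol⟩
  rw [cx, himg, Set.ncard_image_of_injective _ (fun a b hab => congrArg Prod.fst hab)]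

lemma ccL_finite (Y : YD n k) (j : ℕ) : (ccL Y j).Finite := by
  obtain ⟨N, hN⟩ := Y.eventually
  apply (Set.finite_Iio (N + 1)).subset
  rintro m ⟨hc, -⟩
  simp only [Set.mem_Iio]
  by_contra hm
  rcases hc with h0 | hlt
  · omega
  · rw [hN m (by omega), hN (m - 1) (by omega)] at hlt
    exact lt_irrefl _ hlt

lemma cxL_finite (Y : YD n k) (j : ℕ) : (cxL Y j).Finite := by
  obtain ⟨N, hN⟩ := Y.eventually
  apply (Set.finite_Iio (N + 1)).subset
  rintro m ⟨h1, hlt, -⟩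
  simp only [Set.mem_Iio]
  by_contra hm
  rw [hN m (by omega), hN (m - 1) (by omega)] at hlt
  exact lt_irrefl _ hlt

lemma ncard_split (S : Set ℕ) (hS : S.Finite) (a b : ℕ) (hab : a ≠ b) :
    (S.ncard : ℤ) = ((S \ {a, b}).ncard : ℤ)
      + (if a ∈ S then 1 else 0) + (if b ∈ S then 1 else 0) := by
  have h1 : (S ∩ {a, b}).ncard + (S \ {a, b}).ncard = S.ncard :=
    Set.ncard_inter_add_ncard_diff_eq_ncard S {a, b} hS
  have h2 : (S ∩ {a, b}).ncard
      = (if a ∈ S then 1 else 0) + (if b ∈ S then 1 else 0) := by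
    by_cases ha : a ∈ S <;> by_cases hb : b ∈ S <;>
      simp only [ha, hb, if_true, if_false]
    · have he : S ∩ {a, b} = {a, b} := by
        ext x
        simp only [Set.mem_inter_iff, Set.mem_insert_iff, Set.mem_singleton_iff]
        constructor
        · rintro ⟨-, hx⟩; exact hx
        · rintro (rfl | rfl) <;> exact ⟨by assumption, by tauto⟩
      rw [he, Set.ncard_pair hab]
    · have he : S ∩ {a, b} = {a} := by
        ext x
        simp only [Set.mem_inter_iff, Set.mem_insert_iff, Set.mem_singleton_iff]
        constructor
        · rintro ⟨hx, rfl | rfl⟩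
          · rfl
          · exact absurd hx hb
        · rintro rfl; exact ⟨ha, Or.inl rfl⟩
      rw [he, Set.ncard_singleton]
    · have he : S ∩ {a, b} = {b} := by
        ext x
        simp only [Set.mem_inter_iff, Set.mem_insert_iff, Set.mem_singleton_iff]
        constructor
        · rintro ⟨hx, rfl | rfl⟩
          · exact absurd hx ha
          · rfl
        · rintro rfl; exact ⟨hb, Or.inr rfl⟩
      rw [he, Set.ncard_singleton]
    · have he : S ∩ {a, b} = ∅ := by
        ext x
        simp only [Set.mem_inter_iff, Set.mem_insert_iff, Set.mem_singleton_iff,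
          Set.mem_empty_iff_false, iff_false, not_and]
        rintro hx (rfl | rfl)
        · exact ha hx
        · exact hb hx
      rw [he, Set.ncard_empty]
  rw [← h1, h2]
  push_cast [apply_ite (Nat.cast : ℕ → ℤ)]
  ring

lemma colourD_congr {a b : ℤ} (h : a = b) : colourD n a = colourD n b := by rw [h]

set_option maxHeartbeats 2000000 in
lemma corner_count (Y : YD n k) (l : ℕ) (h : ConcaveAt Y l (Y.y l)) (j : ℕ) :
    ((ccL (addY Y l (Y.y l) h) j).ncard : ℤ) - ((cxL (addY Y l (Y.y l) h) j).ncard : ℤ)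
      = ((ccL Y j).ncard : ℤ) - ((cxL Y j).ncard : ℤ)
        + (if j = colourD n ((l : ℤ) + Y.y l - 1) then 1 else 0)
        + (if j = colourD n ((l : ℤ) + Y.y l + 1) then 1 else 0)
        - 2 * (if j = colourD n ((l : ℤ) + Y.y l) then 1 else 0) := by
  set Y' := addY Y l (Y.y l) h with hY'
  have hup : Y'.y = Function.update Y.y l (Y.y l - 1) := rfl
  have hYl : Y'.y l = Y.y l - 1 := by rw [hup, Function.update_self]
  have hYm : ∀ m, m ≠ l → Y'.y m = Y.y m := fun m hm => by rw [hup, Function.update_of_ne hm]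
  have hcv : l = 0 ∨ Y.y (l - 1) < Y.y l := ((concaveAt_iff Y l (Y.y l)).1 h).2
  have hmono : Y.y l ≤ Y.y (l + 1) := Y.mono (Nat.le_succ l)
  set cm := colourD n ((l : ℤ) + Y.y l - 1) with hcm
  set cp := colourD n ((l : ℤ) + Y.y l + 1) with hcp
  set ci := colourD n ((l : ℤ) + Y.y l) with hci
  set cR := colourD n (((l + 1 : ℕ) : ℤ) + Y.y (l + 1)) with hcR
  set cW := colourD n ((l : ℤ) + Y.y (l - 1)) with hcW
  -- agreement away from l, l+1
  have hccd : ccL Y' j \ {l, l + 1} = ccL Y j \ {l, l + 1} := by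
    ext m
    simp only [Set.mem_diff, Set.mem_insert_iff, Set.mem_singleton_iff, ccL,
      Set.mem_setOf_eq, not_or]
    constructor <;> rintro ⟨hmem, h1, h2⟩ <;>
      [(rw [hYm m h1, hYm (m - 1) (by omega)] at hmem);
       (rw [← hYm m h1, ← hYm (m - 1) (by omega)] at hmem)] <;> exact ⟨hmem, h1, h2⟩
  have hcxd : cxL Y' j \ {l, l + 1} = cxL Y j \ {l, l + 1} := by
    ext m
    simp only [Set.mem_diff, Set.mem_insert_iff, Set.mem_singleton_iff, cxL,
      Set.mem_setOf_eq, not_or]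
    constructor <;> rintro ⟨hmem, h1, h2⟩ <;>
      [(rw [hYm m h1, hYm (m - 1) (by omega)] at hmem);
       (rw [← hYm m h1, ← hYm (m - 1) (by omega)] at hmem)] <;> exact ⟨hmem, h1, h2⟩
  -- the eight membership facts
  have M1 : l ∈ ccL Y' j ↔ ((l = 0 ∨ Y.y (l - 1) < Y.y l - 1) ∧ j = cm) := by
    simp only [ccL, Set.mem_setOf_eq, hYl]
    have harg : (l : ℤ) + (Y.y l - 1) = (l : ℤ) + Y.y l - 1 := by ring
    rw [colourD_congr harg, ← hcm]
    rcases Nat.eq_zero_or_pos l with rfl | hl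
    · simp only [true_or, true_and]
      exact eq_comm
    · rw [hYm (l - 1) (by omega)]
      constructor
      · rintro ⟨hc, hcol⟩; exact ⟨hc, hcol.symm⟩
      · rintro ⟨hc, hcol⟩; exact ⟨hc, hcol.symm⟩
  have M2 : l + 1 ∈ ccL Y' j ↔ j = cR := by
    simp only [ccL, Set.mem_setOf_eq, Nat.add_sub_cancel, hYl, hYm (l + 1) (by omega)]
    constructor
    · rintro ⟨-, hcol⟩; exact hcol.symm
    · intro hcol; exact ⟨Or.inr (by omega), hcol.symm⟩
  have M3 : l ∈ ccL Y j ↔ j = ci := by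
    simp only [ccL, Set.mem_setOf_eq]
    constructor
    · rintro ⟨-, hcol⟩; exact hcol.symm
    · intro hcol; exact ⟨hcv, hcol.symm⟩
  have M4 : l + 1 ∈ ccL Y j ↔ (Y.y l < Y.y (l + 1) ∧ j = cR) := by
    simp only [ccL, Set.mem_setOf_eq, Nat.add_sub_cancel]
    constructor
    · rintro ⟨hc, hcol⟩
      exact ⟨hc.resolve_left (by omega), hcol.symm⟩
    · rintro ⟨hc, hcol⟩; exact ⟨Or.inr hc, hcol.symm⟩
  have M5 : l ∈ cxL Y' j ↔ (1 ≤ l ∧ Y.y (l - 1) < Y.y l - 1 ∧ j = cW) := by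
    simp only [cxL, Set.mem_setOf_eq, hYl]
    rcases Nat.eq_zero_or_pos l with rfl | hl
    · simp
    · rw [hYm (l - 1) (by omega)]
      constructor
      · rintro ⟨h1, h2, hcol⟩; exact ⟨h1, h2, hcol.symm⟩
      · rintro ⟨h1, h2, hcol⟩; exact ⟨h1, h2, hcol.symm⟩
  have M6 : l + 1 ∈ cxL Y' j ↔ j = ci := by
    simp only [cxL, Set.mem_setOf_eq, Nat.add_sub_cancel, hYl, hYm (l + 1) (by omega)]
    have harg : ((l + 1 : ℕ) : ℤ) + (Y.y l - 1) = (l : ℤ) + Y.y l := by push_cast; ring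
    rw [colourD_congr harg, ← hci]
    constructor
    · rintro ⟨-, -, hcol⟩; exact hcol.symm
    · intro hcol; exact ⟨by omega, by omega, hcol.symm⟩
  have M7 : l ∈ cxL Y j ↔ (1 ≤ l ∧ j = cW) := by
    simp only [cxL, Set.mem_setOf_eq]
    constructor
    · rintro ⟨h1, -, hcol⟩; exact ⟨h1, hcol.symm⟩
    · rintro ⟨h1, hcol⟩; exact ⟨h1, hcv.resolve_left (by omega), hcol.symm⟩
  have M8 : l + 1 ∈ cxL Y j ↔ (Y.y l < Y.y (l + 1) ∧ j = cp) := by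
    simp only [cxL, Set.mem_setOf_eq, Nat.add_sub_cancel]
    have harg : ((l + 1 : ℕ) : ℤ) + Y.y l = (l : ℤ) + Y.y l + 1 := by push_cast; ring
    rw [colourD_congr harg, ← hcp]
    constructor
    · rintro ⟨-, h2, hcol⟩; exact ⟨h2, hcol.symm⟩
    · rintro ⟨h2, hcol⟩; exact ⟨by omega, h2, hcol.symm⟩
  -- degenerate identifications
  have F2 : Y.y (l + 1) = Y.y l → cR = cp := by
    intro he
    rw [hcR, hcp, he]
    exact colourD_congr (by push_cast; ring)
  have F4 : 1 ≤ l → Y.y (l - 1) = Y.y l - 1 → cW = cm := by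
    intro _ he
    rw [hcW, hcm, he]
    exact colourD_congr (by ring)
  rw [ncard_split _ (ccL_finite Y' j) l (l + 1) (by omega),
    ncard_split _ (cxL_finite Y' j) l (l + 1) (by omega),
    ncard_split _ (ccL_finite Y j) l (l + 1) (by omega),
    ncard_split _ (cxL_finite Y j) l (l + 1) (by omega),
    hccd, hcxd]
  simp only [M1, M2, M3, M4, M5, M6, M7, M8]
  clear_value Y' cm cp ci cR cW
  clear hY' hup hYl hYm hccd hcxd hcm hcp hci hcR hcW M1 M2 M3 M4 M5 M6 M7 M8 h Y'
  by_cases hB : Y.y l < Y.y (l + 1)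
  · simp only [hB, true_and]
    by_cases hl : l = 0
    · have h10 : ¬ (1 ≤ l) := by omega
      simp only [hl, true_or, true_and, h10, false_and, if_false, add_zero]
      split_ifs <;> omega
    · have hl1 : 1 ≤ l := by omega
      simp only [hl, false_or, hl1, true_and]
      by_cases hA : Y.y (l - 1) < Y.y l - 1
      · simp only [hA, true_and]
        split_ifs <;> omega
      · rw [F4 hl1 (by omega)]
        simp only [hA, false_and, if_false, add_zero]
        split_ifs <;> omega
  · have hcb : Y.y (l + 1) = Y.y l := le_antisymm (by omega) hmono
    rw [F2 hcb]
    simp only [hB, false_and, if_false, add_zero]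
    by_cases hl : l = 0
    · have h10 : ¬ (1 ≤ l) := by omega
      simp only [hl, true_or, true_and, h10, false_and, if_false, add_zero]
      split_ifs <;> omega
    · have hl1 : 1 ≤ l := by omega
      simp only [hl, false_or, hl1, true_and]
      by_cases hA : Y.y (l - 1) < Y.y l - 1
      · simp only [hA, true_and]
        split_ifs <;> omega
      · rw [F4 hl1 (by omega)]
        simp only [hA, false_and, if_false, add_zero]
        split_ifs <;> omega

/-! ### Boxes -/

lemma boxes_finite (Y : YD n k) (j : ℕ) :
    {p : ℕ × ℤ | Y.y p.1 < p.2 ∧ p.2 ≤ (k : ℤ) ∧ colour n p.1 p.2 = j}.Finite := by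
  obtain ⟨N, hN⟩ := Y.eventually
  apply Set.Finite.subset ((Finset.range (N + 1) ×ˢ Finset.Icc (Y.y 0 + 1) (k : ℤ)).finite_toSet)
  rintro ⟨m, z⟩ ⟨h1, h2, -⟩
  dsimp only at h1 h2
  simp only [Finset.coe_product, Set.mem_prod, Finset.mem_coe, Finset.mem_range, Finset.mem_Icc]
  refine ⟨?_, ?_, h2⟩
  · by_contra hm
    rw [hN m (by omega)] at h1
    omega
  · have := Y.mono (Nat.zero_le m)
    omega

lemma boxes_add (Y : YD n k) (l : ℕ) (h : ConcaveAt Y l (Y.y l)) (j : ℕ) :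
    boxes j (addY Y l (Y.y l) h)
      = if colourD n ((l : ℤ) + Y.y l) = j then boxes j Y + 1 else boxes j Y := by
  have hk : Y.y l ≤ (k : ℤ) := by
    obtain ⟨N, hN⟩ := Y.eventually
    calc Y.y l ≤ Y.y (max l N) := Y.mono (le_max_left _ _)
    _ = (k : ℤ) := hN _ (le_max_right _ _)
  set Y' := addY Y l (Y.y l) h with hY'
  have hYl : Y'.y l = Y.y l - 1 := Function.update_self _ _ _
  have hYm : ∀ m, m ≠ l → Y'.y m = Y.y m := fun m hm => Function.update_of_ne hm _ _
  by_cases hcol : colourD n ((l : ℤ) + Y.y l) = j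
  · rw [if_pos hcol]
    have hset : {p : ℕ × ℤ | Y'.y p.1 < p.2 ∧ p.2 ≤ (k : ℤ) ∧ colour n p.1 p.2 = j}
        = insert (l, Y.y l)
            {p : ℕ × ℤ | Y.y p.1 < p.2 ∧ p.2 ≤ (k : ℤ) ∧ colour n p.1 p.2 = j} := by
      ext ⟨m, z⟩
      simp only [Set.mem_setOf_eq, Set.mem_insert_iff, Prod.mk.injEq]
      rcases eq_or_ne m l with rfl | hm
      · rw [hYl]
        constructor
        · rintro ⟨h1, h2, h3⟩
          rcases eq_or_ne z (Y.y m) with rfl | hz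
          · exact Or.inl ⟨rfl, rfl⟩
          · exact Or.inr ⟨by omega, h2, h3⟩
        · rintro (⟨-, rfl⟩ | ⟨h1, h2, h3⟩)
          · exact ⟨by omega, hk, by rw [colour_eq]; exact hcol⟩
          · exact ⟨by omega, h2, h3⟩
      · rw [hYm m hm]
        constructor
        · intro hx; exact Or.inr hx
        · rintro (⟨h1, -⟩ | hx)
          · exact absurd h1 hm
          · exact hx
    rw [boxes, hset, Set.ncard_insert_of_notMem
      (by rintro ⟨h1, -, -⟩; exact lt_irrefl _ h1) (boxes_finite Y j), boxes]
  · rw [if_neg hcol]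
    have hset : {p : ℕ × ℤ | Y'.y p.1 < p.2 ∧ p.2 ≤ (k : ℤ) ∧ colour n p.1 p.2 = j}
        = {p : ℕ × ℤ | Y.y p.1 < p.2 ∧ p.2 ≤ (k : ℤ) ∧ colour n p.1 p.2 = j} := by
      ext ⟨m, z⟩
      simp only [Set.mem_setOf_eq]
      rcases eq_or_ne m l with rfl | hm
      · rw [hYl]
        constructor
        · rintro ⟨h1, h2, h3⟩
          rcases eq_or_ne z (Y.y m) with rfl | hz
          · rw [colour_eq] at h3
            exact absurd h3 hcol
          · exact ⟨by omega, h2, h3⟩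
        · rintro ⟨h1, h2, h3⟩
          exact ⟨by omega, h2, h3⟩
      · rw [hYm m hm]
    rw [boxes, hset, boxes]

/-! ### The selected site is a concave corner -/

lemma reduceSig_sublist (s : List ((ℕ × ℤ) × Bool)) : List.Sublist (reduceSig s) s := by
  induction s with
  | nil => exact List.Sublist.refl _
  | cons a s ih =>
    show List.Sublist (if a.2 = false ∧ (reduceSig s).head?.map Prod.snd = some true
        then (reduceSig s).tail else a :: reduceSig s) (a :: s)
    split_ifs with hc
    · exact ((List.tail_sublist _).trans ih).trans (List.sublist_cons_self a s)
    · exact ih.cons₂ a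

lemma ftilde_concave (Y : YD n k) (i : ℕ) (L : List (ℕ × ℤ)) (hL : Enumerates Y i L)
    (p : ℕ × ℤ) (hp : ftildeSite Y i L = some p) :
    ConcaveAt Y p.1 p.2 ∧ colour n p.1 p.2 = i := by
  unfold ftildeSite at hp
  rcases hfo : (reduceSig (sigL Y L)).find? (fun x => !x.2) with _ | x
  · rw [hfo] at hp; simp at hp
  · rw [hfo] at hp
    simp only [Option.map_some] at hp
    have hx2 : x.2 = false := by
      have := List.find?_some hfo
      simpa using this
    have hmem : x ∈ sigL Y L :=
      (reduceSig_sublist _).subset (List.mem_of_find?_eq_some hfo)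
    obtain ⟨q, hq, hxq⟩ := List.mem_map.1 hmem
    have hcorner := (hL.1 q).1 hq
    have hncv : ¬ ConvexAt Y q.1 q.2 := by
      intro hcv
      rw [← hxq] at hx2
      simp [hcv] at hx2
    obtain rfl : q = p := by
      have : x.1 = p := Option.some.inj hp
      rw [← this, ← hxq]
    exact ⟨hcorner.1.resolve_right hncv, hcorner.2⟩

/-- Let `Y` be a Young diagram of charge `k` and `i ∈ I` with `f̃_i Y ≠ 0`
(i.e. the signature rule selects a site `p`). Then `f̃_i Y` is a Young diagram `Y'` of
charge `k` (obtained from `Y` by adding a box at `p`) with `b_i(Y') = b_i(Y) + 1`,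
`b_j(Y') = b_j(Y)` for `j ≠ i`, and
`cc_j(Y') - cx_j(Y') = (cc_j(Y) - cx_j(Y)) - a_{ji}` for every `j ∈ I`. -/
theorem ftilde_weight (n : ℕ) (hn : 2 ≤ n) (k : ℕ) (hk : k ≤ n) (Y : YD n k)
    (i : ℕ) (hi : i ≤ n) (L : List (ℕ × ℤ)) (hL : Enumerates Y i L)
    (p : ℕ × ℤ) (hp : ftildeSite Y i L = some p) :
    ∃ Y' : YD n k, Y'.y = Function.update Y.y p.1 (Y.y p.1 - 1) ∧
      boxes i Y' = boxes i Y + 1 ∧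
      (∀ j ≤ n, j ≠ i → boxes j Y' = boxes j Y) ∧
      (∀ j ≤ n, (cc j Y' : ℤ) - (cx j Y' : ℤ)
        = ((cc j Y : ℤ) - (cx j Y : ℤ)) - cartan n j i) := by
  obtain ⟨hcc0, hcol⟩ := ftilde_concave Y i L hL p hp
  have hz : p.2 = Y.y p.1 := ((concaveAt_iff Y p.1 p.2).1 hcc0).1
  rw [hz] at hcc0
  rw [hz, colour_eq] at hcol
  refine ⟨addY Y p.1 (Y.y p.1) hcc0, rfl, ?_, ?_, ?_⟩
  · rw [boxes_add Y p.1 hcc0 i, if_pos hcol]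
  · intro j hj hji
    rw [boxes_add Y p.1 hcc0 j, if_neg (fun hc => hji (hc.symm.trans hcol))]
  · intro j hj
    rw [cc_eq, cx_eq, cc_eq, cx_eq, corner_count Y p.1 hcc0 j]
    set d : ℤ := (p.1 : ℤ) + Y.y p.1 with hdd
    have hd := key_arith n hn ((d % (2 * (n : ℤ))).toNat) j (emod_toNat_lt n (by omega) d) hj
    rw [← colourD_sub_one n (by omega) d, ← colourD_add_one n (by omega) d,
      ← colourD_eq n d] at hd
    rw [hcol] at hd ⊢
    simp only [indZ] at hd
    linear_combination hd

end
end
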